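/- Fano-type inequality for the chi-square divergence: let N ≥ 1, let P₁,…,P_N and Q₁,…,Q_N be probability measures on a common measurable space (Ω, F) with Pᵢ ≪ Qᵢ and dPᵢ/dQᵢ square-integrable with respect to Qᵢ for each i, and let A₁,…,A_N be events (not necessarily disjoint). If 0 < (1/N)·Σᵢ Qᵢ(Aᵢ) < 1, then (1/N)·Σᵢ Pᵢ(Aᵢ) ≤ (1/N)·Σᵢ Qᵢ(Aᵢ) + sqrt( (1/N)·Σᵢ Qᵢ(Aᵢ) ) · sqrt( (1/N)·Σᵢ χ²(Pᵢ, Qᵢ) ). -/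

import Mathlib

open MeasureTheory
open scoped ENNReal Classical

/-- The chi-square divergence `χ²(P,Q) = ∫ (dP/dQ)² dQ − 1`, for `P ≪ Q` with
square-integrable density. -/
noncomputable def chiSq {Ω : Type*} [MeasurableSpace Ω] (P Q : Measure Ω) : ℝ :=
  (∫ ω, ((P.rnDeriv Q ω).toReal) ^ 2 ∂Q) - 1

lemma chiSq_eq_integral_sq {Ω : Type*} [MeasurableSpace Ω] (P Q : Measure Ω)
    [IsProbabilityMeasure P] [IsProbabilityMeasure Q] (hac : P ≪ Q)
    (hsq : Integrable (fun ω => ((P.rnDeriv Q ω).toReal) ^ 2) Q) :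
    chiSq P Q = ∫ ω, ((P.rnDeriv Q ω).toReal - 1) ^ 2 ∂Q := by
  set f : Ω → ℝ := fun ω => (P.rnDeriv Q ω).toReal with hf
  have hfi : Integrable f Q := Measure.integrable_toReal_rnDeriv
  have hint : ∫ ω, f ω ∂Q = 1 := by
    rw [Measure.integral_toReal_rnDeriv hac]; simp
  have h1 : (fun ω => (f ω - 1) ^ 2) = fun ω => (f ω ^ 2 - 2 * f ω) + 1 := by
    funext ω; ring
  rw [show (∫ ω, ((P.rnDeriv Q ω).toReal - 1) ^ 2 ∂Q) = ∫ ω, (f ω - 1) ^ 2 ∂Q from rfl,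
    h1,
    integral_add (f := fun ω => f ω ^ 2 - 2 * f ω) (g := fun _ => (1 : ℝ))
      (hsq.sub (hfi.const_mul 2)) (integrable_const 1),
    integral_sub (f := fun ω => f ω ^ 2) (g := fun ω => 2 * f ω) hsq (hfi.const_mul 2),
    integral_const_mul, hint, integral_const]
  simp [chiSq]
  ring

lemma chiSq_nonneg {Ω : Type*} [MeasurableSpace Ω] (P Q : Measure Ω)
    [IsProbabilityMeasure P] [IsProbabilityMeasure Q] (hac : P ≪ Q)
    (hsq : Integrable (fun ω => ((P.rnDeriv Q ω).toReal) ^ 2) Q) :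
    0 ≤ chiSq P Q := by
  rw [chiSq_eq_integral_sq P Q hac hsq]
  exact integral_nonneg fun ω => sq_nonneg _

lemma key_ineq {Ω : Type*} [MeasurableSpace Ω] (P Q : Measure Ω)
    [IsProbabilityMeasure P] [IsProbabilityMeasure Q] (hac : P ≪ Q)
    (hsq : Integrable (fun ω => ((P.rnDeriv Q ω).toReal) ^ 2) Q)
    (A : Set Ω) (hA : MeasurableSet A) :
    (P A).toReal ≤ (Q A).toReal +
      Real.sqrt ((Q A).toReal) * Real.sqrt (chiSq P Q) := by
  set f : Ω → ℝ := fun ω => (P.rnDeriv Q ω).toReal with hf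
  have hfm : Measurable f := (Measure.measurable_rnDeriv P Q).ennreal_toReal
  have hfi : Integrable f Q := Measure.integrable_toReal_rnDeriv
  have hg : Integrable (fun ω => (f ω - 1) ^ 2) Q := by
    have h1 : (fun ω => (f ω - 1) ^ 2) = fun ω => (f ω ^ 2 - 2 * f ω) + 1 := by
      funext ω; ring
    rw [h1]; exact (hsq.sub (hfi.const_mul 2)).add (integrable_const 1)
  -- the two functions for Hölder
  set g₁ : Ω → ℝ := A.indicator (fun _ => (1 : ℝ)) with hg₁
  set g₂ : Ω → ℝ := fun ω => |f ω - 1| with hg₂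
  have hg₁m : Measurable g₁ := (measurable_const.indicator hA)
  have hg₂m : Measurable g₂ := (hfm.sub measurable_const).abs
  have hg₁sq : (fun ω => g₁ ω ^ 2) = g₁ := by
    funext ω; by_cases h : ω ∈ A <;> simp [hg₁, h]
  have hg₁int : Integrable g₁ Q := (integrable_const (1 : ℝ)).indicator hA
  have hg₂sq : (fun ω => g₂ ω ^ 2) = fun ω => (f ω - 1) ^ 2 := by
    funext ω; simp [hg₂, sq_abs]
  have hmem₁ : MemLp g₁ (ENNReal.ofReal 2) Q := by
    rw [show ENNReal.ofReal 2 = 2 by norm_num]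
    rw [memLp_two_iff_integrable_sq hg₁m.aestronglyMeasurable]
    rw [hg₁sq]; exact hg₁int
  have hmem₂ : MemLp g₂ (ENNReal.ofReal 2) Q := by
    rw [show ENNReal.ofReal 2 = 2 by norm_num]
    rw [memLp_two_iff_integrable_sq hg₂m.aestronglyMeasurable]
    rw [hg₂sq]; exact hg
  have hpq : (2 : ℝ).HolderConjugate 2 := ⟨by norm_num, by norm_num, by norm_num⟩
  have holder := integral_mul_le_Lp_mul_Lq_of_nonneg hpq
    (Filter.Eventually.of_forall fun ω => Set.indicator_nonneg (fun _ _ => zero_le_one) ω)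
    (Filter.Eventually.of_forall fun ω => abs_nonneg _) hmem₁ hmem₂
  -- compute the pieces
  have hintg₁sq : ∫ ω, g₁ ω ^ (2 : ℝ) ∂Q = (Q A).toReal := by
    have : (fun ω => g₁ ω ^ (2 : ℝ)) = g₁ := by
      funext ω; rw [Real.rpow_two]; exact congrFun hg₁sq ω
    rw [this, hg₁, integral_indicator hA]
    simp [Measure.real]
  have hintg₂sq : ∫ ω, g₂ ω ^ (2 : ℝ) ∂Q = chiSq P Q := by
    have : (fun ω => g₂ ω ^ (2 : ℝ)) = fun ω => (f ω - 1) ^ 2 := by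
      funext ω; rw [Real.rpow_two]; exact congrFun hg₂sq ω
    rw [this, ← chiSq_eq_integral_sq P Q hac hsq]
  have hchi_nonneg : 0 ≤ chiSq P Q := chiSq_nonneg P Q hac hsq
  have hQA_nonneg : (0 : ℝ) ≤ (Q A).toReal := ENNReal.toReal_nonneg
  have hrw : ((Q A).toReal) ^ ((1 : ℝ)/2) * (chiSq P Q) ^ ((1 : ℝ)/2) =
      Real.sqrt ((Q A).toReal) * Real.sqrt (chiSq P Q) := by
    rw [← Real.sqrt_eq_rpow, ← Real.sqrt_eq_rpow]
  rw [hintg₁sq, hintg₂sq, hrw] at holder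
  -- first step: P A - Q A ≤ ∫ g₁ * g₂
  have hPA : (P A).toReal = ∫ ω in A, f ω ∂Q := (Measure.setIntegral_toReal_rnDeriv hac A).symm
  have hQA : (Q A).toReal = ∫ ω in A, (1 : ℝ) ∂Q := by simp [Measure.real]
  have hstep : (P A).toReal - (Q A).toReal ≤ ∫ ω, g₁ ω * g₂ ω ∂Q := by
    rw [hPA, hQA, ← integral_sub hfi.integrableOn (integrable_const 1).integrableOn]
    rw [← integral_indicator hA]
    apply integral_mono
    · exact (hfi.sub (integrable_const 1)).indicator hA
    · have : (fun ω => g₁ ω * g₂ ω) = A.indicator (fun ω => |f ω - 1|) := by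
        funext ω; by_cases h : ω ∈ A <;> simp [hg₁, hg₂, h]
      rw [this]
      exact ((hfi.sub (integrable_const 1)).abs).indicator hA
    · intro ω
      by_cases h : ω ∈ A
      · simp only [hg₁, hg₂, Set.indicator_of_mem h, one_mul]
        exact le_abs_self _
      · simp [hg₁, hg₂, h]
  linarith [hstep.trans holder]

/-- Fano-type inequality for the chi-square divergence, with arbitrary
(not necessarily disjoint) events. -/
theorem fano_chiSq {Ω : Type*} [MeasurableSpace Ω] (N : ℕ) (hN : 1 ≤ N)
    (P Q : Fin N → Measure Ω)
    [∀ i, IsProbabilityMeasure (P i)] [∀ i, IsProbabilityMeasure (Q i)]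
    (hac : ∀ i, P i ≪ Q i)
    (hsq : ∀ i, Integrable (fun ω => (((P i).rnDeriv (Q i) ω).toReal) ^ 2) (Q i))
    (A : Fin N → Set Ω) (hA : ∀ i, MeasurableSet (A i))
    (hq0 : 0 < (1 / N : ℝ) * ∑ i, (Q i (A i)).toReal)
    (hq1 : (1 / N : ℝ) * ∑ i, (Q i (A i)).toReal < 1) :
    (1 / N : ℝ) * ∑ i, (P i (A i)).toReal ≤
      (1 / N : ℝ) * ∑ i, (Q i (A i)).toReal +
        Real.sqrt ((1 / N : ℝ) * ∑ i, (Q i (A i)).toReal) *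
          Real.sqrt ((1 / N : ℝ) * ∑ i, chiSq (P i) (Q i)) := by
  have hNpos : (0 : ℝ) < N := by exact_mod_cast Nat.lt_of_lt_of_le Nat.zero_lt_one hN
  have hN' : (0 : ℝ) ≤ 1 / N := by positivity
  have hqnn : ∀ i : Fin N, (0 : ℝ) ≤ (Q i (A i)).toReal := fun i => ENNReal.toReal_nonneg
  have hcnn : ∀ i : Fin N, (0 : ℝ) ≤ chiSq (P i) (Q i) :=
    fun i => chiSq_nonneg (P i) (Q i) (hac i) (hsq i)
  have hsum : ∑ i, (P i (A i)).toReal ≤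
      ∑ i, (Q i (A i)).toReal +
        Real.sqrt (∑ i, (Q i (A i)).toReal) * Real.sqrt (∑ i, chiSq (P i) (Q i)) := by
    calc ∑ i, (P i (A i)).toReal
        ≤ ∑ i, ((Q i (A i)).toReal +
            Real.sqrt ((Q i (A i)).toReal) * Real.sqrt (chiSq (P i) (Q i))) := by
          apply Finset.sum_le_sum
          intro i _
          exact key_ineq (P i) (Q i) (hac i) (hsq i) (A i) (hA i)
      _ = ∑ i, (Q i (A i)).toReal +
            ∑ i, Real.sqrt ((Q i (A i)).toReal) * Real.sqrt (chiSq (P i) (Q i)) := by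
          rw [Finset.sum_add_distrib]
      _ ≤ ∑ i, (Q i (A i)).toReal +
            Real.sqrt (∑ i, (Q i (A i)).toReal) * Real.sqrt (∑ i, chiSq (P i) (Q i)) := by
          gcongr
          exact Real.sum_sqrt_mul_sqrt_le _ hqnn hcnn
  have hrw : Real.sqrt ((1 / N : ℝ) * ∑ i, (Q i (A i)).toReal) *
      Real.sqrt ((1 / N : ℝ) * ∑ i, chiSq (P i) (Q i)) =
      (1 / N : ℝ) * (Real.sqrt (∑ i, (Q i (A i)).toReal) *
        Real.sqrt (∑ i, chiSq (P i) (Q i))) := by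
    rw [Real.sqrt_mul hN', Real.sqrt_mul hN']
    rw [show Real.sqrt (1/N) * Real.sqrt (∑ i, (Q i (A i)).toReal) *
        (Real.sqrt (1/N) * Real.sqrt (∑ i, chiSq (P i) (Q i))) =
        (Real.sqrt (1/N) * Real.sqrt (1/N)) * (Real.sqrt (∑ i, (Q i (A i)).toReal) *
        Real.sqrt (∑ i, chiSq (P i) (Q i))) from by ring]
    rw [Real.mul_self_sqrt hN']
  rw [hrw, ← mul_add]
  exact mul_le_mul_of_nonneg_left hsum hN'
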